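/- Every integer sequence G with gcd(G(1), G(2)) = 1 satisfying G(n+2) = G(n) + G(n+1) is complete mod 4: every residue mod 4 occurs among the G(n). -/

import Mathlib

lemma gib_key : ∀ a b r : ZMod 4, ((a = 1 ∨ a = 3) ∨ (b = 1 ∨ b = 3)) →
    r = a ∨ r = b ∨ r = a + b ∨ r = b + (a + b) ∨ r = (a + b) + (b + (a + b)) ∨
    r = (b + (a + b)) + ((a + b) + (b + (a + b))) := by decide

lemma odd_cast4 (a : ℤ) (h : Odd a) : (a : ZMod 4) = 1 ∨ (a : ZMod 4) = 3 := by
  obtain ⟨k, hk⟩ := h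
  have : (a : ZMod 4) = 2 * (k : ZMod 4) + 1 := by push_cast [hk]; ring
  rw [this]
  have h4 : ∀ c : ZMod 4, 2 * c + 1 = 1 ∨ 2 * c + 1 = 3 := by decide
  exact h4 _

theorem gibonacci_complete_mod_4
    (G : ℕ → ℤ) (hab : Int.gcd (G 1) (G 2) = 1)
    (hrec : ∀ n ≥ 1, G (n + 2) = G n + G (n + 1)) :
    ∀ r : ℤ, ∃ n ≥ 1, G n ≡ r [ZMOD 4] := by
  intro r
  -- not both even
  have hodd : Odd (G 1) ∨ Odd (G 2) := by
    by_contra h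
    push_neg at h
    rw [Int.not_odd_iff_even, Int.not_odd_iff_even] at h
    have h2 : (2 : ℤ) ∣ (Int.gcd (G 1) (G 2) : ℤ) :=
      Int.dvd_coe_gcd h.1.two_dvd h.2.two_dvd
    rw [hab] at h2
    norm_num at h2
  have key := gib_key (G 1 : ZMod 4) (G 2 : ZMod 4) (r : ZMod 4)
    (by rcases hodd with h | h
        · exact Or.inl (odd_cast4 _ h)
        · exact Or.inr (odd_cast4 _ h))
  have e3 : G 3 = G 1 + G 2 := hrec 1 (by norm_num)
  have e4 : G 4 = G 2 + G 3 := hrec 2 (by norm_num)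
  have e5 : G 5 = G 3 + G 4 := hrec 3 (by norm_num)
  have e6 : G 6 = G 4 + G 5 := hrec 4 (by norm_num)
  rcases key with h | h | h | h | h | h
  · exact ⟨1, by norm_num, (ZMod.intCast_eq_intCast_iff _ _ _).mp h.symm⟩
  · exact ⟨2, by norm_num, (ZMod.intCast_eq_intCast_iff _ _ _).mp h.symm⟩
  · refine ⟨3, by norm_num, (ZMod.intCast_eq_intCast_iff _ _ _).mp ?_⟩
    rw [e3]; push_cast; rw [← h]
  · refine ⟨4, by norm_num, (ZMod.intCast_eq_intCast_iff _ _ _).mp ?_⟩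
    rw [e4, e3]; push_cast; rw [← h]
  · refine ⟨5, by norm_num, (ZMod.intCast_eq_intCast_iff _ _ _).mp ?_⟩
    rw [e5, e4, e3]; push_cast; rw [← h]
  · refine ⟨6, by norm_num, (ZMod.intCast_eq_intCast_iff _ _ _).mp ?_⟩
    rw [e6, e5, e4, e3]; push_cast; rw [← h]
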